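/- Let K ≥ 1 be an integer, let δ ≠ 0 be real, and let c : ℕ → ℝ be any sequence with |c(n)| < 1 for all n. On the space V of finitely supported functions x : ℕ × Fin 2 → ℝ, define the block-diagonal Hamiltonian H by (H x)(n, 0) = (2K+4n+2)·x(n, 0) + x(n, 1) and (H x)(n, 1) = δ²·x(n, 0) + (2K+4n+2)·x(n, 1), and the bilinear form ⟨x, y⟩_Θ = Σ_{n∈ℕ} [ |δ|·x(n,0)·y(n,0) + c(n)·(x(n,0)·y(n,1) + x(n,1)·y(n,0)) + (1/|δ|)·x(n,1)·y(n,1) ]. Then ⟨·,·⟩_Θ is a symmetric positive-definite bilinear form on V, and H is symmetric with respect to it: ⟨H x, y⟩_Θ = ⟨x, H y⟩_Θ for all x, y ∈ V. -/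

import Mathlib

/-- The tilded block-diagonal Hamiltonian near the exceptional point `α = K`, acting on
functions `x : ℕ × Fin 2 → ℝ`: `(H x)(n, 0) = (2K+4n+2)·x(n,0) + x(n,1)`,
`(H x)(n, 1) = δ²·x(n,0) + (2K+4n+2)·x(n,1)`. -/
noncomputable def blockHamK (K : ℕ) (δ : ℝ) (x : ℕ × Fin 2 → ℝ) : ℕ × Fin 2 → ℝ :=
  fun p =>
    if p.2 = 0 then (2 * (K : ℝ) + 4 * (p.1 : ℝ) + 2) * x (p.1, 0) + x (p.1, 1)
    else δ ^ 2 * x (p.1, 0) + (2 * (K : ℝ) + 4 * (p.1 : ℝ) + 2) * x (p.1, 1)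

/-- The bilinear form `⟨x, y⟩_Θ` induced by the block-diagonal metric
`Θ = ⊕ₙ [[|δ|, c n], [c n, 1/|δ|]]`. -/
noncomputable def ipThetaK (δ : ℝ) (c : ℕ → ℝ) (x y : ℕ × Fin 2 → ℝ) : ℝ :=
  ∑ᶠ n : ℕ, (|δ| * x (n, 0) * y (n, 0)
    + c n * (x (n, 0) * y (n, 1) + x (n, 1) * y (n, 0))
    + (1 / |δ|) * x (n, 1) * y (n, 1))

lemma suppFinAux {x : ℕ × Fin 2 → ℝ} (hx : (Function.support x).Finite) (i : Fin 2) :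
    (Function.support fun n => x (n, i)).Finite :=
  (hx.image Prod.fst).subset (fun n hn => ⟨(n, i), hn, rfl⟩)

lemma summandFin {δ : ℝ} {c : ℕ → ℝ} {x y : ℕ × Fin 2 → ℝ}
    (hx : (Function.support x).Finite) :
    (Function.support fun n => |δ| * x (n, 0) * y (n, 0)
      + c n * (x (n, 0) * y (n, 1) + x (n, 1) * y (n, 0))
      + (1 / |δ|) * x (n, 1) * y (n, 1)).Finite := by
  refine ((suppFinAux hx 0).union (suppFinAux hx 1)).subset (fun n hn => ?_)
  by_contra h
  simp only [Set.mem_union, Function.mem_support, not_or, not_not] at h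
  obtain ⟨h0, h1⟩ := h
  simp [Function.mem_support, h0, h1] at hn

lemma keyPos (δ : ℝ) (hδ : δ ≠ 0) (γ : ℝ) (hγ : |γ| < 1)
    (a b : ℝ) (hab : a ≠ 0 ∨ b ≠ 0) :
    0 < |δ| * a * a + γ * (a * b + b * a) + (1 / |δ|) * b * b := by
  have hd : 0 < |δ| := abs_pos.mpr hδ
  set d := |δ| with hdd
  obtain ⟨hc1, hc2⟩ := abs_lt.mp hγ
  have hne : d * a - b ≠ 0 ∨ d * a + b ≠ 0 := by
    by_contra h
    push_neg at h
    obtain ⟨h1, h2⟩ := h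
    have ha0 : a = 0 := by
      have : 2 * d * a = 0 := by linarith
      have := mul_eq_zero.mp this
      rcases this with h' | h'
      · exact absurd (mul_eq_zero.mp h') (by push_neg; exact ⟨two_ne_zero, ne_of_gt hd⟩)
      · exact h'
    have hb0 : b = 0 := by rw [ha0] at h1; linarith
    rcases hab with h | h <;> [exact h ha0; exact h hb0]
  have hnum : 0 < d ^ 2 * a ^ 2 + 2 * γ * d * a * b + b ^ 2 := by
    rcases hne with h | h
    · have hs1 : 0 < (d * a - b) ^ 2 := by
        have := pow_pos (abs_pos.mpr h) 2
        rwa [sq_abs] at this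
      nlinarith [mul_pos (by linarith : (0:ℝ) < 1 - γ) hs1,
        mul_nonneg (by linarith : (0:ℝ) ≤ 1 + γ) (sq_nonneg (d * a + b))]
    · have hs2 : 0 < (d * a + b) ^ 2 := by
        have := pow_pos (abs_pos.mpr h) 2
        rwa [sq_abs] at this
      nlinarith [mul_pos (by linarith : (0:ℝ) < 1 + γ) hs2,
        mul_nonneg (by linarith : (0:ℝ) ≤ 1 - γ) (sq_nonneg (d * a - b))]
  have hdiv := div_pos hnum hd
  calc (0:ℝ) < (d ^ 2 * a ^ 2 + 2 * γ * d * a * b + b ^ 2) / d := hdiv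
    _ = d * a * a + γ * (a * b + b * a) + (1 / d) * b * b := by
      field_simp; ring

/-- For an integer `K ≥ 1`, real `δ ≠ 0` and any sequence `c` with
`|c n| < 1`, on finitely supported `x : ℕ × Fin 2 → ℝ` the form `⟨·,·⟩_Θ` is bilinear,
symmetric, and positive definite, and the block-diagonal Hamiltonian with blocks
`[[2K+4n+2, 1], [δ², 2K+4n+2]]` is symmetric with respect to it. -/
theorem stmt_11 (K : ℕ) (hK : 1 ≤ K) (δ : ℝ) (hδ : δ ≠ 0)
    (c : ℕ → ℝ) (hc : ∀ n, |c n| < 1) :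
    -- bilinearity (additivity and homogeneity in each argument)
    (∀ x x' y : ℕ × Fin 2 → ℝ, (Function.support x).Finite →
      (Function.support x').Finite → (Function.support y).Finite →
      ipThetaK δ c (x + x') y = ipThetaK δ c x y + ipThetaK δ c x' y ∧
      ipThetaK δ c y (x + x') = ipThetaK δ c y x + ipThetaK δ c y x') ∧
    (∀ (s : ℝ) (x y : ℕ × Fin 2 → ℝ),
      ipThetaK δ c (s • x) y = s * ipThetaK δ c x y ∧
      ipThetaK δ c x (s • y) = s * ipThetaK δ c x y) ∧
    -- symmetry
    (∀ x y : ℕ × Fin 2 → ℝ, ipThetaK δ c x y = ipThetaK δ c y x) ∧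
    -- positive definiteness
    (∀ x : ℕ × Fin 2 → ℝ, (Function.support x).Finite → x ≠ 0 →
      0 < ipThetaK δ c x x) ∧
    -- symmetry of the Hamiltonian with respect to the form
    (∀ x y : ℕ × Fin 2 → ℝ, (Function.support x).Finite →
      (Function.support y).Finite →
      ipThetaK δ c (blockHamK K δ x) y = ipThetaK δ c x (blockHamK K δ y)) := by
  have hd : 0 < |δ| := abs_pos.mpr hδ
  refine ⟨?_, ?_, ?_, ?_, ?_⟩
  · -- additivity
    intro x x' y hx hx' hy
    constructor
    · simp only [ipThetaK, Pi.add_apply]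
      rw [← finsum_add_distrib (summandFin hx) (summandFin hx')]
      exact finsum_congr fun n => by ring
    · simp only [ipThetaK, Pi.add_apply]
      rw [← finsum_add_distrib (summandFin hy) (summandFin hy)]
      exact finsum_congr fun n => by ring
  · -- homogeneity
    intro s x y
    constructor
    · simp only [ipThetaK, Pi.smul_apply, smul_eq_mul]
      rw [← smul_eq_mul, smul_finsum]
      exact finsum_congr fun n => by simp [smul_eq_mul]; ring
    · simp only [ipThetaK, Pi.smul_apply, smul_eq_mul]
      rw [← smul_eq_mul, smul_finsum]
      exact finsum_congr fun n => by simp [smul_eq_mul]; ring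
  · -- symmetry
    intro x y
    exact finsum_congr fun n => by ring
  · -- positive definiteness
    intro x hx hx0
    obtain ⟨p, hp⟩ := Function.ne_iff.mp hx0
    simp only [Pi.zero_apply] at hp
    have hab : x (p.1, 0) ≠ 0 ∨ x (p.1, 1) ≠ 0 := by
      obtain ⟨n, i⟩ := p
      fin_cases i
      · exact Or.inl hp
      · exact Or.inr hp
    have hposn : 0 < |δ| * x (p.1, 0) * x (p.1, 0)
        + c p.1 * (x (p.1, 0) * x (p.1, 1) + x (p.1, 1) * x (p.1, 0))
        + (1 / |δ|) * x (p.1, 1) * x (p.1, 1) :=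
      keyPos δ hδ (c p.1) (hc p.1) _ _ hab
    have hfin := summandFin (δ := δ) (c := c) (x := x) (y := x) hx
    have hnonneg : ∀ n, 0 ≤ |δ| * x (n, 0) * x (n, 0)
        + c n * (x (n, 0) * x (n, 1) + x (n, 1) * x (n, 0))
        + (1 / |δ|) * x (n, 1) * x (n, 1) := by
      intro n
      by_cases h : x (n, 0) ≠ 0 ∨ x (n, 1) ≠ 0
      · exact le_of_lt (keyPos δ hδ (c n) (hc n) _ _ h)
      · push_neg at h
        simp [h.1, h.2]
    rw [ipThetaK, finsum_eq_sum _ hfin]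
    have hmem : p.1 ∈ hfin.toFinset := by
      rw [Set.Finite.mem_toFinset, Function.mem_support]
      exact ne_of_gt hposn
    calc (0:ℝ) < _ := hposn
      _ ≤ _ := Finset.single_le_sum (fun n _ => hnonneg n) hmem
  · -- symmetry of the Hamiltonian
    intro x y hx hy
    refine finsum_congr fun n => ?_
    have h1 : blockHamK K δ x (n, 0)
        = (2 * (K : ℝ) + 4 * (n : ℝ) + 2) * x (n, 0) + x (n, 1) := rfl
    have h2 : blockHamK K δ x (n, 1)
        = δ ^ 2 * x (n, 0) + (2 * (K : ℝ) + 4 * (n : ℝ) + 2) * x (n, 1) := rfl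
    have h3 : blockHamK K δ y (n, 0)
        = (2 * (K : ℝ) + 4 * (n : ℝ) + 2) * y (n, 0) + y (n, 1) := rfl
    have h4 : blockHamK K δ y (n, 1)
        = δ ^ 2 * y (n, 0) + (2 * (K : ℝ) + 4 * (n : ℝ) + 2) * y (n, 1) := rfl
    have hsq : δ ^ 2 = |δ| ^ 2 := (sq_abs δ).symm
    rw [h1, h2, h3, h4, hsq]
    field_simp
    linear_combination
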